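/- Let (X_{it}) be a real-valued field whose rows (X_{it})_{t∈ℤ}, i=1,2,…, are iid stationary m-dependent sequences with generic element X, and let S_{ij}^{(n)}=Σ_{t=1}^n X_{it}X_{jt} and p=p_n→∞. Assume: (i) the distribution of X² is in MDA(Λ), i.e. there exist c_n>0, d_n∈ℝ with c_n⁻¹(max_{i≤n}X_i² − d_n) converging in distribution to the standard Gumbel law; (ii) P(S_{11}^{(n)} − n E[X²] > c_{np}x + d_{np}) ~ n P(X²>c_{np}x + d_{np}) for every x∈ℝ; (iii) P(S_{12}^{(n)} − n(E[X])² > c_{np}x + d_{np}) ≤ c n P(X₁X₂>c_{np}x + d_{np}) = o(p^{−2}) for every x∈ℝ, where X₁,X₂ are independent copies of X. Then c_{np}^{−1} max_{1≤i<j≤p}((S_{ij}^{(n)} − n(E[X])²) − d_{np}) → −∞ in probability, and c_{np}^{−1} max_{i≤p}((S_{ii}^{(n)} − n E[X²]) − d_{np}) converges in distribution to the standard Gumbel law Λ(x)=exp(−e^{−x}). -/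

import Mathlib

open MeasureTheory ProbabilityTheory Filter Set Asymptotics
open scoped ENNReal NNReal Topology

namespace PLD

variable {Ω : Type*} [MeasureSpace Ω]

/-- Probability of an event, as a real number. -/
noncomputable def pr (A : Set Ω) : ℝ := (ℙ A).toReal

/-- The tail `P(X > x)` of a real random variable. -/
noncomputable def tail (X : Ω → ℝ) (x : ℝ) : ℝ := pr {ω | x < X ω}

/-- The two-sided tail `P(|X| > x)`. -/
noncomputable def atail (X : Ω → ℝ) (x : ℝ) : ℝ := pr {ω | x < |X ω|}

/-- The tail of a measure on `ℝ`. -/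
noncomputable def mtail (μ : Measure ℝ) (x : ℝ) : ℝ := (μ (Set.Ioi x)).toReal

/-- Partial sums `X_0 + ⋯ + X_{n-1}`. -/
def psum (X : ℕ → Ω → ℝ) (n : ℕ) (ω : Ω) : ℝ := ∑ i ∈ Finset.range n, X i ω

/-- A function is slowly varying at infinity. -/
def SlowlyVarying (L : ℝ → ℝ) : Prop :=
  ∀ c : ℝ, 0 < c → Tendsto (fun x => L (c * x) / L x) atTop (𝓝 1)

/-- A function is regularly varying of index `ρ` at infinity. -/
def RegularlyVaryingFun (f : ℝ → ℝ) (ρ : ℝ) : Prop :=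
  ∀ c : ℝ, 0 < c → Tendsto (fun x => f (c * x) / f x) atTop (𝓝 (c ^ ρ))

/-- The right tail of `X` is regularly varying with index `α`:
`P(X > x) = L(x) x^{-α}` for a slowly varying `L`. -/
def RegVaryingTail (X : Ω → ℝ) (α : ℝ) : Prop :=
  ∃ L : ℝ → ℝ, SlowlyVarying L ∧ ∀ᶠ x in atTop, tail X x = L x * x ^ (-α)

/-- Tail balance condition with constants `pp > 0`, `pm ≥ 0`, `pp + pm = 1`. -/
structure TailBalance (X : Ω → ℝ) (pp pm : ℝ) : Prop where
  pos : 0 < pp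
  nonneg : 0 ≤ pm
  sum_eq_one : pp + pm = 1
  plus : Tendsto (fun x => tail X x / atail X x) atTop (𝓝 pp)
  minus : Tendsto (fun x => tail (fun ω => -X ω) x / atail X x) atTop (𝓝 pm)

/-- `n`-fold convolution power of a measure on `ℝ` (law of the sum of `n` iid copies). -/
noncomputable def convPow (μ : Measure ℝ) : ℕ → Measure ℝ
  | 0 => Measure.dirac 0
  | n + 1 => Measure.map (fun p : ℝ × ℝ => p.1 + p.2) ((convPow μ n).prod μ)

/-- A distribution concentrated on `[0,∞)` is subexponential:
`P(S_n > x) ∼ n P(X > x)` as `x → ∞` for every `n ≥ 2`. -/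
def SubexponentialMeasure (μ : Measure ℝ) : Prop :=
  μ (Set.Iio 0) = 0 ∧
  ∀ n : ℕ, 2 ≤ n →
    Tendsto (fun x => mtail (convPow μ n) x / mtail μ x) atTop (𝓝 (n : ℝ))

/-- Two-sided subexponential class `𝒮`: the positive part `X⁺` has a subexponential
distribution and the tail balance condition holds. -/
def ClassS (X : Ω → ℝ) (pp pm : ℝ) : Prop :=
  SubexponentialMeasure (Measure.map (fun ω => max (X ω) 0) ℙ) ∧ TailBalance X pp pm

/-- `a` is an auxiliary function for the (tail-) function `T` in the Gumbel MDA sense: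
`T(x + y a(x))/T(x) → e^{-y}`. -/
def IsAuxiliary (T : ℝ → ℝ) (a : ℝ → ℝ) : Prop :=
  (∀ᶠ x in atTop, 0 < a x) ∧
  ∀ y : ℝ, Tendsto (fun x => T (x + y * a x) / T x) atTop (𝓝 (Real.exp (-y)))

/-- `F ∈ MDA(Λ)` (Gumbel maximum domain of attraction, infinite right endpoint),
via the Pickands–Balkema–de Haan characterization. -/
def GumbelMDA (X : Ω → ℝ) : Prop := ∃ a : ℝ → ℝ, IsAuxiliary (tail X) a

/-- Class `LN`: subexponential distributions with `F̄(x) = exp(-S(x))`, `S` slowly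
varying and `S(x)/log x → ∞`. -/
structure ClassLN (X : Ω → ℝ) (S : ℝ → ℝ) (pp pm : ℝ) : Prop where
  classS : ClassS X pp pm
  tail_eq : ∀ᶠ x in atTop, tail X x = Real.exp (-S x)
  slow : SlowlyVarying S
  heavy : Tendsto (fun x => S x / Real.log x) atTop atTop

/-- Strict stationarity of a sequence of random variables. -/
def Stationary (X : ℕ → Ω → ℝ) : Prop :=
  ∀ (k n : ℕ),
    Measure.map (fun ω => fun i : Fin n => X (k + i) ω) ℙ
      = Measure.map (fun ω => fun i : Fin n => X i ω) ℙ

/-- `m`-dependence: the σ-fields generated by `(X_s, s ≤ t)` and `(X_s, s ≥ t+h)`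
are independent whenever `h > m`. -/
def MDep (X : ℕ → Ω → ℝ) (m : ℕ) : Prop :=
  ∀ t h : ℕ, m < h →
    Indep (⨆ s ∈ Set.Iic t, MeasurableSpace.comap (X s) inferInstance)
          (⨆ s ∈ Set.Ici (t + h), MeasurableSpace.comap (X s) inferInstance) ℙ

/-- `sup_{x > u_n} |f_n(x)| → 0` as `n → ∞`. -/
def UnifSmall (u : ℕ → ℝ) (f : ℕ → ℝ → ℝ) : Prop :=
  ∀ ε : ℝ, 0 < ε → ∀ᶠ n in atTop, ∀ x : ℝ, u n < x → |f n x| < ε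

/-- An iid sequence (indexed by `ℕ`). -/
def IID (Z : ℕ → Ω → ℝ) : Prop :=
  iIndepFun Z ℙ ∧
  ∀ j, Measure.map (Z j) ℙ = Measure.map (Z 0) ℙ

/-- An iid sequence indexed by `ℤ`. -/
def IIDZ (Z : ℤ → Ω → ℝ) : Prop :=
  iIndepFun Z ℙ ∧
  ∀ j, Measure.map (Z j) ℙ = Measure.map (Z 0) ℙ

/-- Condition (C) of Mikosch–Rodionov for the sequence `X` with hazard function `S`,
threshold function `g` and separating sequence `t`. -/
structure CondC (X : ℕ → Ω → ℝ) (m : ℕ) (S g : ℝ → ℝ) (t : ℕ → ℝ) : Prop where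
  /- C1 -/
  g_mono : ∃ x₀ : ℝ, MonotoneOn g (Set.Ici x₀)
  g_tendsto : Tendsto g atTop atTop
  g_le : ∃ C : ℝ, 0 < C ∧ ∀ᶠ x in atTop, g x ≤ C * x / S x
  /- C2 -/
  t_tendsto : Tendsto t atTop atTop
  S_unif : ∀ δ : ℝ, 0 < δ →
    UnifSmall (fun n => t n * δ) (fun _ x => S x / S (g x) - 1)
  g_sqrt : Tendsto (fun n => g (t n) / Real.sqrt n) atTop atTop
  iid_ld : ∀ δ : ℝ, 0 < δ → UnifSmall (fun n => t n * δ)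
    (fun n x => mtail (convPow (Measure.map (X 0) ℙ) n) x / (n * tail (X 0) x) - 1)
  /- C3 -/
  mdep : MDep X m
  anti : ∀ ε : ℝ, 0 < ε → ∀ h : ℕ, 1 ≤ h → h ≤ m →
    Tendsto (fun x => pr {ω | ε * g x < |X 0 ω| ∧ ε * x < |X h ω|} / tail (X 0) x)
      atTop (𝓝 0)

/-- Condition (RV) of Mikosch–Rodionov. -/
structure CondRV (X : ℕ → Ω → ℝ) (m : ℕ) (α : ℝ) (pp pm : ℝ) (t : ℕ → ℝ) : Prop where
  /- RV1 -/
  t_growth : Tendsto (fun n : ℕ => t n / Real.sqrt (n * Real.log n)) atTop atTop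
  /- RV2 -/
  alpha_gt_two : 2 < α
  rv : RegVaryingTail (X 0) α
  balance : TailBalance (X 0) pp pm
  /- RV3 -/
  mdep : MDep X m
  anti : ∀ h : ℕ, 1 ≤ h → h ≤ m →
    Tendsto (fun x => pr {ω | x < |X h ω| ∧ x < |X 0 ω|} / atail (X 0) x) atTop (𝓝 0)

/-- A (mean-zero or general) Gaussian process: all finite linear combinations
are one-dimensional Gaussian. -/
def GaussianProcess (Y : ℕ → Ω → ℝ) : Prop :=
  ∀ (s : Finset ℕ) (c : ℕ → ℝ), ∃ (mu : ℝ) (v : ℝ≥0),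
    Measure.map (fun ω => ∑ i ∈ s, c i * Y i ω) ℙ = gaussianReal mu v

/-- Entries of the sample covariance matrix: `S_{ij}^{(n)} = ∑_{t<n} X_{it} X_{jt}`. -/
def sij (X : ℕ → ℕ → Ω → ℝ) (i j n : ℕ) (ω : Ω) : ℝ :=
  ∑ t ∈ Finset.range n, X i t ω * X j t ω

/-- `max_{i ≤ p} (S_{ii}^{(n)} - n e)`. -/
noncomputable def diagMax (X : ℕ → ℕ → Ω → ℝ) (p n : ℕ) (e : ℝ) (ω : Ω) : ℝ :=
  ⨆ i : Fin p, (sij X i i n ω - n * e)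

/-- `max_{1 ≤ i < j ≤ p} |S_{ij}^{(n)} - n e|`. -/
noncomputable def offMaxAbs (X : ℕ → ℕ → Ω → ℝ) (p n : ℕ) (e : ℝ) (ω : Ω) : ℝ :=
  ⨆ q : {q : Fin p × Fin p // q.1 < q.2}, |sij X q.1.1 q.1.2 n ω - n * e|

/-- `max_{1 ≤ i < j ≤ p} (S_{ij}^{(n)} - n e)`. -/
noncomputable def offMax (X : ℕ → ℕ → Ω → ℝ) (p n : ℕ) (e : ℝ) (ω : Ω) : ℝ :=
  ⨆ q : {q : Fin p × Fin p // q.1 < q.2}, (sij X q.1.1 q.1.2 n ω - n * e)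

/-- The rows `(X_{i·})` of the field are iid sequences. -/
def RowsIID (X : ℕ → ℕ → Ω → ℝ) : Prop :=
  iIndepFun (fun i ω => fun t => X i t ω) ℙ ∧
  ∀ i, Measure.map (fun ω => fun t => X i t ω) ℙ
      = Measure.map (fun ω => fun t => X 0 t ω) ℙ



/-! ### Auxiliary lemmas for the proof of `statement7` -/

lemma aux_log_sandwich {q : ℝ} (h1 : q < 1) :
    q ≤ -Real.log (1 - q) ∧ (1 - q) * (-Real.log (1 - q)) ≤ q := by
  have hpos : (0:ℝ) < 1 - q := by linarith
  constructor
  · have := Real.log_le_sub_one_of_pos hpos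
    linarith
  · have hinv : (0:ℝ) < (1 - q)⁻¹ := by positivity
    have h2 := Real.log_le_sub_one_of_pos hinv
    rw [Real.log_inv] at h2
    nlinarith [mul_le_mul_of_nonneg_left h2 hpos.le, mul_inv_cancel₀ hpos.ne']

/-- If `k_n q_n → l` with `q ∈ [0,1]`, `k → ∞`, then `(1-q_n)^{k_n} → exp (-l)`. -/
lemma aux_pow_tendsto_exp {q : ℕ → ℝ} {k : ℕ → ℕ} {l : ℝ}
    (hq0 : ∀ n, 0 ≤ q n)
    (hk : Tendsto k atTop atTop)
    (h : Tendsto (fun n => (k n : ℝ) * q n) atTop (𝓝 l)) :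
    Tendsto (fun n => (1 - q n) ^ (k n)) atTop (𝓝 (Real.exp (-l))) := by
  have hq_to0 : Tendsto q atTop (𝓝 0) := by
    have hkinv : Tendsto (fun n => ((k n : ℝ))⁻¹) atTop (𝓝 0) :=
      (tendsto_natCast_atTop_atTop.comp hk).inv_tendsto_atTop
    have h2 := h.mul hkinv
    rw [mul_zero] at h2
    apply h2.congr'
    filter_upwards [hk.eventually_ge_atTop 1] with n hn
    have : (0:ℝ) < (k n : ℝ) := by exact_mod_cast hn
    field_simp
  have hev : ∀ᶠ n in atTop, q n < 1/2 := by
    have := hq_to0 (Iio_mem_nhds (by norm_num : (0:ℝ) < 1/2))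
    filter_upwards [this] with n hn; exact hn
  have hA : Tendsto (fun n => (k n : ℝ) * (-Real.log (1 - q n))) atTop (𝓝 l) := by
    have hub : Tendsto (fun n => ((k n : ℝ) * q n) / (1 - q n)) atTop (𝓝 l) := by
      have h2 : Tendsto (fun n => (1 - q n)) atTop (𝓝 1) := by
        have := hq_to0.const_sub 1; simpa using this
      have := h.div h2 one_ne_zero
      rw [div_one] at this; exact this
    apply tendsto_of_tendsto_of_tendsto_of_le_of_le' h hub
    · filter_upwards [hev] with n hn
      have := (aux_log_sandwich (by linarith : q n < 1)).1
      exact mul_le_mul_of_nonneg_left this (Nat.cast_nonneg _)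
    · filter_upwards [hev] with n hn
      have hs := (aux_log_sandwich (by linarith : q n < 1)).2
      have hpos : (0:ℝ) < 1 - q n := by linarith
      rw [le_div_iff₀ hpos]
      calc (k n : ℝ) * (-Real.log (1 - q n)) * (1 - q n)
          = (k n : ℝ) * ((1 - q n) * (-Real.log (1 - q n))) := by ring
        _ ≤ (k n : ℝ) * q n := mul_le_mul_of_nonneg_left hs (Nat.cast_nonneg _)
  have hexp : Tendsto (fun n => Real.exp ((k n : ℝ) * Real.log (1 - q n))) atTop
      (𝓝 (Real.exp (-l))) := by
    apply Real.continuous_exp.continuousAt.tendsto.comp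
    have := hA.neg
    refine this.congr (fun n => ?_)
    show -((k n : ℝ) * -Real.log (1 - q n)) = _
    ring
  apply hexp.congr'
  filter_upwards [hev] with n hn
  have hpos : (0:ℝ) < 1 - q n := by linarith
  rw [← Real.exp_log hpos, ← Real.exp_nat_mul, Real.exp_log hpos]

/-- If `(1-q_n)^{k_n} → L > 0` with `q ∈ [0,1]`, `k → ∞`, then `k_n q_n → -log L`. -/
lemma aux_mul_tendsto_of_pow {q : ℕ → ℝ} {k : ℕ → ℕ} {L : ℝ}
    (hq1 : ∀ n, q n ≤ 1)
    (hk : Tendsto k atTop atTop) (hL : 0 < L)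
    (h : Tendsto (fun n => (1 - q n) ^ (k n)) atTop (𝓝 L)) :
    Tendsto (fun n => (k n : ℝ) * q n) atTop (𝓝 (-Real.log L)) := by
  have hev : ∀ᶠ n in atTop, 0 < 1 - q n := by
    have h2 := h (Ioi_mem_nhds (by linarith : L/2 < L))
    filter_upwards [h2, hk.eventually_ge_atTop 1] with n hn hkn
    by_contra hcon
    push_neg at hcon
    have hq1' : 1 - q n = 0 := le_antisymm hcon (by linarith [hq1 n])
    simp only [Set.mem_preimage, Set.mem_Ioi, hq1',
      zero_pow (by omega : k n ≠ 0)] at hn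
    linarith
  have hlog : Tendsto (fun n => (k n : ℝ) * Real.log (1 - q n)) atTop (𝓝 (Real.log L)) := by
    have := (Real.continuousAt_log hL.ne').tendsto.comp h
    apply this.congr'
    filter_upwards [hev] with n hn
    simp [Real.log_pow]
  have hq_to0 : Tendsto q atTop (𝓝 0) := by
    have hkinv : Tendsto (fun n => ((k n : ℝ))⁻¹) atTop (𝓝 0) :=
      (tendsto_natCast_atTop_atTop.comp hk).inv_tendsto_atTop
    have hl0 : Tendsto (fun n => Real.log (1 - q n)) atTop (𝓝 0) := by
      have h2 := hlog.mul hkinv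
      rw [mul_zero] at h2
      apply h2.congr'
      filter_upwards [hk.eventually_ge_atTop 1] with n hn
      have : (0:ℝ) < (k n : ℝ) := by exact_mod_cast hn
      field_simp
    have he : Tendsto (fun n => Real.exp (Real.log (1 - q n))) atTop (𝓝 1) := by
      have := Real.continuous_exp.continuousAt.tendsto.comp hl0
      simpa [Function.comp_def] using this
    have h1q : Tendsto (fun n => 1 - q n) atTop (𝓝 1) := by
      apply he.congr'
      filter_upwards [hev] with n hn
      rw [Real.exp_log hn]
    have := h1q.const_sub 1
    simpa using this
  have hA : Tendsto (fun n => (k n : ℝ) * (-Real.log (1 - q n))) atTop (𝓝 (-Real.log L)) := by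
    have := hlog.neg
    apply this.congr
    intro n; ring
  have h1q : Tendsto (fun n => 1 - q n) atTop (𝓝 1) := by
    have := hq_to0.const_sub 1; simpa using this
  have hlb : Tendsto (fun n => (1 - q n) * ((k n : ℝ) * (-Real.log (1 - q n)))) atTop
      (𝓝 (-Real.log L)) := by
    have := h1q.mul hA
    simpa using this
  apply tendsto_of_tendsto_of_tendsto_of_le_of_le' hlb hA
  · filter_upwards [hev] with n hn
    have hs := (aux_log_sandwich (by linarith : q n < 1)).2
    calc (1 - q n) * ((k n:ℝ) * (-Real.log (1 - q n)))
        = (k n:ℝ) * ((1 - q n) * (-Real.log (1 - q n))) := by ring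
      _ ≤ (k n:ℝ) * q n := mul_le_mul_of_nonneg_left hs (Nat.cast_nonneg _)
  · filter_upwards [hev] with n hn
    exact mul_le_mul_of_nonneg_left (aux_log_sandwich (by linarith : q n < 1)).1
      (Nat.cast_nonneg _)

lemma aux_pr_nonneg (A : Set Ω) : 0 ≤ pr A := ENNReal.toReal_nonneg

lemma aux_pr_le_one [IsProbabilityMeasure (ℙ : Measure Ω)] (A : Set Ω) : pr A ≤ 1 := by
  have h := prob_le_one (μ := (ℙ : Measure Ω)) (s := A)
  calc pr A ≤ (1 : ℝ≥0∞).toReal := ENNReal.toReal_mono ENNReal.one_ne_top h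
    _ = 1 := by simp

lemma aux_inv_shift_iff {cc dd x a : ℝ} (hc : 0 < cc) :
    (cc⁻¹ * (a - dd) ≤ x) ↔ a ≤ cc * x + dd := by
  rw [inv_mul_le_iff₀ hc]
  constructor <;> intro <;> linarith

lemma aux_iid_max_prob [IsProbabilityMeasure (ℙ : Measure Ω)]
    (g : ℕ → Ω → ℝ) (hg : ∀ i, Measurable (g i))
    (hind : iIndepFun g ℙ)
    (hid : ∀ i, Measure.map (g i) ℙ = Measure.map (g 0) ℙ)
    (p : ℕ) (hp : 1 ≤ p) (u : ℝ) :
    pr {ω | (⨆ i : Fin p, g i ω) ≤ u} = (1 - tail (g 0) u) ^ p := by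
  have hNE : Nonempty (Fin p) := ⟨⟨0, hp⟩⟩
  have hset : {ω : Ω | (⨆ i : Fin p, g i ω) ≤ u}
      = ⋂ i ∈ Finset.range p, g i ⁻¹' Set.Iic u := by
    ext ω
    simp only [Set.mem_setOf_eq, Set.mem_iInter, Finset.mem_range, Set.mem_preimage, Set.mem_Iic]
    rw [ciSup_le_iff (Set.Finite.bddAbove (Set.finite_range _))]
    constructor
    · intro h i hi; exact h ⟨i, hi⟩
    · intro h i; exact h i i.2
  have heach : ∀ i : ℕ, ℙ (g i ⁻¹' Set.Iic u) = ℙ (g 0 ⁻¹' Set.Iic u) := by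
    intro i
    rw [← Measure.map_apply (hg i) measurableSet_Iic, hid i,
      Measure.map_apply (hg 0) measurableSet_Iic]
  have hprod : ℙ {ω : Ω | (⨆ i : Fin p, g i ω) ≤ u} = (ℙ (g 0 ⁻¹' Set.Iic u)) ^ p := by
    rw [hset, hind.meas_biInter (fun i _ => ⟨Set.Iic u, measurableSet_Iic, rfl⟩),
      Finset.prod_congr rfl (fun i _ => heach i), Finset.prod_const, Finset.card_range]
  have h1 : (ℙ (g 0 ⁻¹' Set.Iic u)).toReal = 1 - tail (g 0) u := by
    have hcompl : (g 0 ⁻¹' Set.Iic u)ᶜ = {ω | u < g 0 ω} := by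
      ext ω; simp [Set.mem_compl_iff, not_le]
    have hsum := prob_compl_eq_one_sub (μ := (ℙ : Measure Ω))
      (s := g 0 ⁻¹' Set.Iic u) (hg 0 measurableSet_Iic)
    rw [hcompl] at hsum
    have hle : ℙ (g 0 ⁻¹' Set.Iic u) ≤ 1 := prob_le_one
    rw [tail, pr, hsum, ENNReal.toReal_sub_of_le hle ENNReal.one_ne_top]
    simp
  rw [pr, hprod, ENNReal.toReal_pow, h1]

lemma aux_pair_prob_eq [IsProbabilityMeasure (ℙ : Measure Ω)]
    (R : ℕ → Ω → (ℕ → ℝ)) (hRmeas : ∀ i, Measurable (R i))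
    (hindep : iIndepFun R ℙ)
    (hident : ∀ i, Measure.map (R i) ℙ = Measure.map (R 0) ℙ)
    (F : (ℕ → ℝ) × (ℕ → ℝ) → ℝ) (hF : Measurable F)
    {i j : ℕ} (hij : i ≠ j) (B : Set ℝ) (hB : MeasurableSet B) :
    ℙ {ω | F (R i ω, R j ω) ∈ B} = ℙ {ω | F (R 0 ω, R 1 ω) ∈ B} := by
  have key : ∀ {a b : ℕ}, a ≠ b → ℙ {ω | F (R a ω, R b ω) ∈ B}
      = ((Measure.map (R 0) ℙ).prod (Measure.map (R 0) ℙ)) (F ⁻¹' B) := by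
    intro a b hab
    have hlaw : Measure.map (fun ω => (R a ω, R b ω)) ℙ
        = (Measure.map (R 0) ℙ).prod (Measure.map (R 0) ℙ) := by
      have h := hindep.indepFun hab
      rw [indepFun_iff_map_prod_eq_prod_map_map (hRmeas a).aemeasurable
        (hRmeas b).aemeasurable] at h
      rw [h, hident a, hident b]
    have hpre : {ω | F (R a ω, R b ω) ∈ B} = (fun ω => (R a ω, R b ω)) ⁻¹' (F ⁻¹' B) := rfl
    rw [hpre, ← Measure.map_apply ((hRmeas a).prodMk (hRmeas b)) (hF hB), hlaw]
  rw [key hij, key (by norm_num : (0:ℕ) ≠ 1)]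

/-- **Lemma 5.2** (sample covariance matrices, Gumbel case). -/
theorem statement7
    {Ω : Type*} [MeasureSpace Ω] [IsProbabilityMeasure (ℙ : Measure Ω)]
    (X : ℕ → ℕ → Ω → ℝ) (hmeas : ∀ i t, Measurable (X i t))
    (m : ℕ) (hrows : RowsIID X)
    (hstat : Stationary (X 0)) (hmdep : MDep (X 0) m)
    (p : ℕ → ℕ) (hp : Tendsto p atTop atTop)
    (c : ℕ → ℝ) (d : ℕ → ℝ) (hc_pos : ∀ n, 0 < c n)
    -- (i): the distribution of `X²` is in `MDA(Λ)`
    (hgumbel : ∀ x : ℝ,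
      Tendsto (fun n : ℕ =>
          pr {ω | (c n)⁻¹ * ((⨆ i : Fin n, (X i 0 ω) ^ 2) - d n) ≤ x}) atTop
        (𝓝 (Real.exp (-Real.exp (-x)))))
    -- (ii): tail asymptotics for the diagonal entries
    (hdiag : ∀ x : ℝ,
      Tendsto (fun n : ℕ =>
          tail (fun ω => sij X 0 0 n ω - n * ∫ ω', (X 0 0 ω') ^ 2)
              (c (n * p n) * x + d (n * p n))
            / (n * tail (fun ω => (X 0 0 ω) ^ 2) (c (n * p n) * x + d (n * p n))))
        atTop (𝓝 1))
    -- (iii): bound for the off-diagonal entries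
    (hoff : ∃ C : ℝ, 0 < C ∧
      (∀ x : ℝ, ∀ᶠ n : ℕ in atTop,
        tail (fun ω => sij X 0 1 n ω - n * (∫ ω', X 0 0 ω') ^ 2)
            (c (n * p n) * x + d (n * p n))
          ≤ C * n * tail (fun ω => X 0 0 ω * X 1 0 ω)
              (c (n * p n) * x + d (n * p n))) ∧
      (∀ x : ℝ,
        Tendsto (fun n : ℕ =>
          (p n : ℝ) ^ 2 * (n * tail (fun ω => X 0 0 ω * X 1 0 ω)
            (c (n * p n) * x + d (n * p n)))) atTop (𝓝 0))) :
    -- (5.5): the off-diagonal maximum tends to `-∞` in probability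
    (∀ M : ℝ,
      Tendsto (fun n : ℕ =>
        pr {ω | M ≤ (c (n * p n))⁻¹ *
          (offMax X (p n) n ((∫ ω', X 0 0 ω') ^ 2) ω - d (n * p n))}) atTop (𝓝 0)) ∧
    -- (5.6): Gumbel limit for the diagonal maximum
    (∀ x : ℝ,
      Tendsto (fun n : ℕ =>
        pr {ω | (c (n * p n))⁻¹ *
          (diagMax X (p n) n (∫ ω', (X 0 0 ω') ^ 2) ω - d (n * p n)) ≤ x}) atTop
        (𝓝 (Real.exp (-Real.exp (-x))))) := by
  classical
  obtain ⟨hindep0, hident0⟩ := hrows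
  set R : ℕ → Ω → (ℕ → ℝ) := fun i ω t => X i t ω with hRdef
  have hindep : iIndepFun R ℙ :=
    hindep0
  have hident : ∀ i, Measure.map (R i) ℙ = Measure.map (R 0) ℙ := hident0
  have hRmeas : ∀ i, Measurable (R i) := fun i => measurable_pi_lambda _ (fun t => hmeas i t)
  have hpn1 : ∀ᶠ n in atTop, 1 ≤ p n := hp.eventually_ge_atTop 1
  have hm : Tendsto (fun n => n * p n) atTop atTop := by
    apply tendsto_atTop_mono' atTop ?_ tendsto_id
    filter_upwards [hpn1] with n hn
    calc (id n : ℕ) = n * 1 := (mul_one n).symm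
      _ ≤ n * p n := Nat.mul_le_mul_left n hn
  constructor
  · -- off-diagonal part
    intro M
    obtain ⟨C, hC, hoffb, hoffz⟩ := hoff
    have key : ∀ᶠ n in atTop,
        pr {ω | M ≤ (c (n * p n))⁻¹ *
            (offMax X (p n) n ((∫ ω', X 0 0 ω') ^ 2) ω - d (n * p n))}
          ≤ (p n : ℝ)^2 * tail (fun ω => sij X 0 1 n ω - n * (∫ ω', X 0 0 ω') ^ 2)
              (c (n * p n) * (M - 1) + d (n * p n)) := by
      filter_upwards [hp.eventually_ge_atTop 2] with n hp2
      set e2 : ℝ := (∫ ω', X 0 0 ω') ^ 2 with he2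
      set y : ℝ := c (n * p n) * (M - 1) + d (n * p n) with hy
      have hF : Measurable (fun ab : (ℕ → ℝ) × (ℕ → ℝ) =>
          (∑ t ∈ Finset.range n, ab.1 t * ab.2 t) - n * e2) := by
        apply Measurable.sub _ measurable_const
        apply Finset.measurable_sum
        intro t _
        exact ((measurable_pi_apply t).comp measurable_fst).mul
          ((measurable_pi_apply t).comp measurable_snd)
      have hsub : {ω | M ≤ (c (n * p n))⁻¹ * (offMax X (p n) n e2 ω - d (n * p n))} ⊆
          ⋃ q : {q : Fin (p n) × Fin (p n) // q.1 < q.2},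
            {ω | y < sij X q.1.1 q.1.2 n ω - n * e2} := by
        intro ω hω
        have hc' := hc_pos (n * p n)
        have hle : c (n * p n) * M + d (n * p n) ≤ offMax X (p n) n e2 ω := by
          have h2 := mul_le_mul_of_nonneg_left hω hc'.le
          rw [← mul_assoc, mul_inv_cancel₀ hc'.ne', one_mul] at h2
          linarith
        have hNE : Nonempty {q : Fin (p n) × Fin (p n) // q.1 < q.2} :=
          ⟨⟨(⟨0, by omega⟩, ⟨1, by omega⟩), by simp [Fin.mk_lt_mk]⟩⟩
        obtain ⟨q0, hq0⟩ := Finite.exists_max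
          (fun q : {q : Fin (p n) × Fin (p n) // q.1 < q.2} =>
            sij X q.1.1 q.1.2 n ω - n * e2)
        have hsup : offMax X (p n) n e2 ω ≤ sij X q0.1.1 q0.1.2 n ω - n * e2 :=
          ciSup_le hq0
        refine Set.mem_iUnion.2 ⟨q0, ?_⟩
        simp only [Set.mem_setOf_eq]
        have hlt : y < c (n * p n) * M + d (n * p n) := by
          simp only [hy]; nlinarith
        linarith
      have hA01 : ∀ q : {q : Fin (p n) × Fin (p n) // q.1 < q.2},
          ℙ {ω | y < sij X q.1.1 q.1.2 n ω - n * e2}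
            = ℙ {ω | y < sij X 0 1 n ω - n * e2} := by
        intro q
        have hij : ((q.1.1 : Fin (p n)) : ℕ) ≠ ((q.1.2 : Fin (p n)) : ℕ) := by
          have := q.2
          exact fun hcontra => absurd (Fin.val_injective hcontra) (ne_of_lt this)
        exact aux_pair_prob_eq R hRmeas hindep hident
          (fun ab => (∑ t ∈ Finset.range n, ab.1 t * ab.2 t) - n * e2) hF hij
          (Set.Ioi y) measurableSet_Ioi
      have hmeasle : ℙ {ω | M ≤ (c (n * p n))⁻¹ * (offMax X (p n) n e2 ω - d (n * p n))}
          ≤ ((p n : ℝ≥0∞))^2 * ℙ {ω | y < sij X 0 1 n ω - n * e2} := by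
        calc ℙ {ω | M ≤ (c (n * p n))⁻¹ * (offMax X (p n) n e2 ω - d (n * p n))}
            ≤ ℙ (⋃ q : {q : Fin (p n) × Fin (p n) // q.1 < q.2},
                {ω | y < sij X q.1.1 q.1.2 n ω - n * e2}) := measure_mono hsub
          _ ≤ ∑' q : {q : Fin (p n) × Fin (p n) // q.1 < q.2},
                ℙ {ω | y < sij X q.1.1 q.1.2 n ω - n * e2} := measure_iUnion_le _
          _ = ∑ q : {q : Fin (p n) × Fin (p n) // q.1 < q.2},
                ℙ {ω | y < sij X q.1.1 q.1.2 n ω - n * e2} := tsum_fintype _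
          _ = (Fintype.card {q : Fin (p n) × Fin (p n) // q.1 < q.2} : ℝ≥0∞)
                * ℙ {ω | y < sij X 0 1 n ω - n * e2} := by
              rw [Finset.sum_congr rfl (fun q _ => hA01 q), Finset.sum_const,
                Finset.card_univ, nsmul_eq_mul]
          _ ≤ ((p n : ℝ≥0∞))^2 * ℙ {ω | y < sij X 0 1 n ω - n * e2} := by
              apply mul_le_mul_left
              have hcard : Fintype.card {q : Fin (p n) × Fin (p n) // q.1 < q.2}
                  ≤ p n ^ 2 := by
                calc Fintype.card {q : Fin (p n) × Fin (p n) // q.1 < q.2}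
                    ≤ Fintype.card (Fin (p n) × Fin (p n)) := Fintype.card_subtype_le _
                  _ = p n ^ 2 := by simp [sq]
              calc (Fintype.card {q : Fin (p n) × Fin (p n) // q.1 < q.2} : ℝ≥0∞)
                  ≤ ((p n ^ 2 : ℕ) : ℝ≥0∞) := Nat.cast_le.2 hcard
                _ = ((p n : ℝ≥0∞))^2 := by push_cast; ring
      have hfin : ((p n : ℝ≥0∞))^2 * ℙ {ω | y < sij X 0 1 n ω - n * e2} ≠ ∞ :=
        ENNReal.mul_ne_top (by simp) (measure_ne_top _ _)
      calc pr {ω | M ≤ (c (n * p n))⁻¹ * (offMax X (p n) n e2 ω - d (n * p n))}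
          ≤ (((p n : ℝ≥0∞))^2 * ℙ {ω | y < sij X 0 1 n ω - n * e2}).toReal :=
            ENNReal.toReal_mono hfin hmeasle
        _ = (p n : ℝ)^2 * tail (fun ω => sij X 0 1 n ω - n * e2) y := by
            rw [ENNReal.toReal_mul, ENNReal.toReal_pow]
            simp [tail, pr]
    have hlim : Tendsto (fun n : ℕ => C * ((p n : ℝ)^2 * ((n : ℝ) *
        tail (fun ω => X 0 0 ω * X 1 0 ω) (c (n * p n) * (M - 1) + d (n * p n)))))
        atTop (𝓝 0) := by
      have := (hoffz (M - 1)).const_mul C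
      simpa using this
    apply squeeze_zero' (Eventually.of_forall (fun n => aux_pr_nonneg _)) ?_ hlim
    filter_upwards [key, hoffb (M - 1)] with n h1 h2
    calc pr {ω | M ≤ (c (n * p n))⁻¹ *
          (offMax X (p n) n ((∫ ω', X 0 0 ω') ^ 2) ω - d (n * p n))}
        ≤ (p n : ℝ)^2 * tail (fun ω => sij X 0 1 n ω - n * (∫ ω', X 0 0 ω') ^ 2)
            (c (n * p n) * (M - 1) + d (n * p n)) := h1
      _ ≤ (p n : ℝ)^2 * (C * n * tail (fun ω => X 0 0 ω * X 1 0 ω)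
            (c (n * p n) * (M - 1) + d (n * p n))) := by
          apply mul_le_mul_of_nonneg_left h2 (by positivity)
      _ = C * ((p n : ℝ)^2 * ((n : ℝ) * tail (fun ω => X 0 0 ω * X 1 0 ω)
            (c (n * p n) * (M - 1) + d (n * p n)))) := by ring
  · -- diagonal part
    intro x
    set e : ℝ := ∫ ω', (X 0 0 ω') ^ 2 with he
    set q : ℕ → ℝ := fun k => tail (fun ω => (X 0 0 ω) ^ 2) (c k * x + d k) with hqdef
    have hq0 : ∀ k, 0 ≤ q k := fun k => aux_pr_nonneg _
    have hq1 : ∀ k, q k ≤ 1 := fun k => aux_pr_le_one _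
    have hψ : Measurable (fun a : ℕ → ℝ => (a 0) ^ 2) :=
      (measurable_pi_apply 0).pow measurable_const
    have hgmeas : ∀ i, Measurable (fun ω => (X i 0 ω) ^ 2) :=
      fun i => (hmeas i 0).pow measurable_const
    have hgind : iIndepFun
        (fun i ω => (X i 0 ω) ^ 2) ℙ :=
      hindep.comp (fun _ => fun a : ℕ → ℝ => (a 0) ^ 2) (fun _ => hψ)
    have hgid : ∀ i, Measure.map (fun ω => (X i 0 ω) ^ 2) ℙ
        = Measure.map (fun ω => (X 0 0 ω) ^ 2) ℙ := by
      intro i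
      have h1 : (fun ω => (X i 0 ω) ^ 2) = (fun a : ℕ → ℝ => (a 0) ^ 2) ∘ R i := rfl
      have h2 : (fun ω => (X 0 0 ω) ^ 2) = (fun a : ℕ → ℝ => (a 0) ^ 2) ∘ R 0 := rfl
      rw [h1, h2, ← Measure.map_map hψ (hRmeas i), hident i, Measure.map_map hψ (hRmeas 0)]
    have hG1 : ∀ᶠ k in atTop,
        pr {ω | (c k)⁻¹ * ((⨆ i : Fin k, (X i 0 ω) ^ 2) - d k) ≤ x} = (1 - q k) ^ k := by
      filter_upwards [eventually_ge_atTop 1] with k hk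
      have hset : {ω | (c k)⁻¹ * ((⨆ i : Fin k, (X i 0 ω) ^ 2) - d k) ≤ x}
          = {ω | (⨆ i : Fin k, (X i 0 ω) ^ 2) ≤ c k * x + d k} := by
        ext ω
        simp only [Set.mem_setOf_eq]
        exact aux_inv_shift_iff (hc_pos k)
      rw [hset]
      exact aux_iid_max_prob _ hgmeas hgind hgid k hk _
    have hmulq : Tendsto (fun k : ℕ => (k : ℝ) * q k) atTop (𝓝 (Real.exp (-x))) := by
      have hL : (0:ℝ) < Real.exp (-Real.exp (-x)) := Real.exp_pos _
      have h := aux_mul_tendsto_of_pow (k := id) hq1 tendsto_id hL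
        (((hgumbel x).congr' hG1))
      simpa [Real.log_exp] using h
    have hmq : Tendsto (fun n : ℕ => ((n * p n : ℕ) : ℝ) * q (n * p n)) atTop
        (𝓝 (Real.exp (-x))) := hmulq.comp hm
    set t : ℕ → ℝ := fun n => tail (fun ω => sij X 0 0 n ω - n * e)
      (c (n * p n) * x + d (n * p n)) with htdef
    have ht0 : ∀ n, 0 ≤ t n := fun n => aux_pr_nonneg _
    have hdiag' : Tendsto (fun n : ℕ => t n / ((n : ℝ) * q (n * p n))) atTop (𝓝 1) := hdiag x
    have hDne : ∀ᶠ n : ℕ in atTop, ((n : ℝ) * q (n * p n)) ≠ 0 := by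
      filter_upwards [hdiag'.eventually (lt_mem_nhds (by norm_num : (1:ℝ)/2 < 1))]
        with n hn h0
      rw [h0, div_zero] at hn
      norm_num at hn
    have hpt : Tendsto (fun n : ℕ => (p n : ℝ) * t n) atTop (𝓝 (Real.exp (-x))) := by
      have hPD : Tendsto (fun n : ℕ => (p n : ℝ) * ((n : ℝ) * q (n * p n))) atTop
          (𝓝 (Real.exp (-x))) := by
        apply hmq.congr
        intro n; push_cast; ring
      have h := hdiag'.mul hPD
      rw [one_mul] at h
      apply h.congr'
      filter_upwards [hDne] with n hD
      have hn0 : (n : ℝ) ≠ 0 := left_ne_zero_of_mul hD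
      have hq0' : q (n * p n) ≠ 0 := right_ne_zero_of_mul hD
      field_simp
    have hG5 : ∀ᶠ n in atTop,
        pr {ω | (c (n * p n))⁻¹ * (diagMax X (p n) n e ω - d (n * p n)) ≤ x}
          = (1 - t n) ^ (p n) := by
      filter_upwards [hpn1] with n hn1
      have hφ : Measurable (fun a : ℕ → ℝ => (∑ s ∈ Finset.range n, a s * a s) - n * e) := by
        apply Measurable.sub _ measurable_const
        apply Finset.measurable_sum
        intro s _
        exact (measurable_pi_apply s).mul (measurable_pi_apply s)
      have hgind' : iIndepFun
          (fun i ω => sij X i i n ω - n * e) ℙ :=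
        hindep.comp (fun _ => fun a : ℕ → ℝ => (∑ s ∈ Finset.range n, a s * a s) - n * e)
          (fun _ => hφ)
      have hgmeas' : ∀ i, Measurable (fun ω => sij X i i n ω - n * e) :=
        fun i => hφ.comp (hRmeas i)
      have hgid' : ∀ i, Measure.map (fun ω => sij X i i n ω - n * e) ℙ
          = Measure.map (fun ω => sij X 0 0 n ω - n * e) ℙ := by
        intro i
        have h1 : (fun ω => sij X i i n ω - n * e)
            = (fun a : ℕ → ℝ => (∑ s ∈ Finset.range n, a s * a s) - n * e) ∘ R i := rfl
        have h2 : (fun ω => sij X 0 0 n ω - n * e)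
            = (fun a : ℕ → ℝ => (∑ s ∈ Finset.range n, a s * a s) - n * e) ∘ R 0 := rfl
        rw [h1, h2, ← Measure.map_map hφ (hRmeas i), hident i, Measure.map_map hφ (hRmeas 0)]
      have hset : {ω | (c (n * p n))⁻¹ * (diagMax X (p n) n e ω - d (n * p n)) ≤ x}
          = {ω | (⨆ i : Fin (p n), (fun (i : ℕ) ω => sij X i i n ω - n * e) i ω)
              ≤ c (n * p n) * x + d (n * p n)} := by
        ext ω
        simp only [Set.mem_setOf_eq]
        exact aux_inv_shift_iff (hc_pos (n * p n))
      rw [hset]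
      exact aux_iid_max_prob _ hgmeas' hgind' hgid' (p n) hn1 _
    have hfinal := aux_pow_tendsto_exp (q := t) (k := p) ht0 hp hpt
    exact Tendsto.congr' (hG5.mono fun n h => h.symm) hfinal

end PLD
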